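/- For every integer d ≥ 2 and every integer m ≥ 0, the polynomials H_d(m) = Σ_{k=0}^{d} C(d,k)·C(m+d−k, d) satisfy the recurrence d·H_d(m) = (2m+1)·H_{d−1}(m) + (d−1)·H_{d−2}(m). -/

import Mathlib

open Finset Nat

-- trinomial revision
lemma trin (e j k : ℕ) (hk : k ≤ e) :
    e.choose k * (e - k).choose j = e.choose j * (e - j).choose k := by
  by_cases h : k + j ≤ e
  · have hj : j ≤ e := le_trans (Nat.le_add_left _ _) h
    have h1 : j ≤ e - k := by omega
    have h2 : k ≤ e - j := by omega
    have key : e.choose k * (e - k).choose j * (k ! * (j ! * (e - k - j)!))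
        = e.choose j * (e - j).choose k * (k ! * (j ! * (e - k - j)!)) := by
      have A := Nat.choose_mul_factorial_mul_factorial h1
      have B := Nat.choose_mul_factorial_mul_factorial hk
      have C := Nat.choose_mul_factorial_mul_factorial h2
      have D := Nat.choose_mul_factorial_mul_factorial hj
      have e1 : e - k - j = (e - k) - j := rfl
      have e2 : e - k - j = (e - j) - k := by omega
      calc e.choose k * (e - k).choose j * (k ! * (j ! * (e - k - j)!))
          = ((e - k).choose j * j ! * ((e-k) - j)!) * e.choose k * k ! := by ring_nf
        _ = (e - k)! * e.choose k * k ! := by rw [A]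
        _ = e.choose k * k ! * (e - k)! := by ring
        _ = e ! := B
        _ = e.choose j * j ! * (e - j)! := D.symm
        _ = e.choose j * j ! * ((e - j).choose k * k ! * ((e - j) - k)!) := by rw [C]
        _ = e.choose j * (e - j).choose k * (k ! * (j ! * (e - k - j)!)) := by
            rw [← e2]; ring
    exact Nat.eq_of_mul_eq_mul_right (by positivity) key
  · rw [Nat.choose_eq_zero_of_lt (show e - k < j by omega)]
    by_cases hj : j ≤ e
    · rw [Nat.choose_eq_zero_of_lt (show e - j < k by omega)]; simp
    · rw [Nat.choose_eq_zero_of_lt (show e < j by omega)]; simp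

lemma sum_trin (e j : ℕ) (hj : j ≤ e) :
    ∑ k ∈ range (e + 1), e.choose k * (e - k).choose j = e.choose j * 2 ^ (e - j) := by
  have : ∑ k ∈ range (e + 1), e.choose k * (e - k).choose j
      = ∑ k ∈ range (e + 1), e.choose j * (e - j).choose k := by
    refine Finset.sum_congr rfl fun k hk => ?_
    exact trin e j k (by simpa using Nat.lt_succ_iff.mp (mem_range.mp hk))
  rw [this, ← Finset.mul_sum]
  congr 1
  rw [← Nat.sum_range_choose (e - j)]
  symm
  apply Finset.sum_subset
  · intro x hx; simp at hx ⊢; omega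
  · intro x _ hx; simp at hx; exact Nat.choose_eq_zero_of_lt (by omega)

lemma basisform (e m : ℕ) :
    ∑ k ∈ range (e + 1), e.choose k * (m + e - k).choose e
      = ∑ j ∈ range (e + 1), 2 ^ j * (e.choose j * m.choose j) := by
  have step : ∀ k ∈ range (e + 1),
      e.choose k * (m + e - k).choose e
        = ∑ i ∈ range (e + 1), e.choose k * (m.choose i * (e - k).choose (e - i)) := by
    intro k hk
    have hk' : k ≤ e := Nat.lt_succ_iff.mp (mem_range.mp hk)
    have : m + e - k = m + (e - k) := by omega
    rw [this, Nat.add_choose_eq, Finset.Nat.sum_antidiagonal_eq_sum_range_succ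
      (fun i j => m.choose i * (e - k).choose j), Finset.mul_sum]
  rw [Finset.sum_congr rfl step, Finset.sum_comm]
  refine Finset.sum_congr rfl fun i hi => ?_
  have hi' : i ≤ e := Nat.lt_succ_iff.mp (mem_range.mp hi)
  have : ∑ k ∈ range (e + 1), e.choose k * (m.choose i * (e - k).choose (e - i))
      = m.choose i * ∑ k ∈ range (e + 1), e.choose k * (e - k).choose (e - i) := by
    rw [Finset.mul_sum]; refine Finset.sum_congr rfl fun k _ => by ring
  rw [this, sum_trin e (e - i) (by omega), Nat.choose_symm hi']
  have : e - (e - i) = i := by omega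
  rw [this]; ring

lemma key1 (m j : ℕ) :
    (2 * m + 1) * m.choose j
      = 2 * ((j + 1) * m.choose (j + 1)) + (2 * j + 1) * m.choose j := by
  by_cases hj : j ≤ m
  · have h : (j + 1) * m.choose (j + 1) = (m - j) * m.choose j := by
      rw [mul_comm, Nat.choose_succ_right_eq, mul_comm]
    rw [h]
    have h2 : 2 * m + 1 = 2 * (m - j) + (2 * j + 1) := by omega
    rw [h2]; ring
  · rw [Nat.choose_eq_zero_of_lt (by omega), Nat.choose_eq_zero_of_lt (by omega)]
    simp

lemma key2 (d j : ℕ) (hd : 2 ≤ d) (hj : j ≤ d) :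
    d * d.choose j
      = j * (d - 1).choose (j - 1) + (2 * j + 1) * (d - 1).choose j
        + (d - 1) * (d - 2).choose j := by
  rcases Nat.eq_zero_or_pos j with rfl | hj0
  · simp; omega
  obtain ⟨i, rfl⟩ : ∃ i, j = i + 1 := ⟨j - 1, by omega⟩
  simp only [Nat.add_sub_cancel]
  set a := (d - 1).choose i with ha
  set b := (d - 1).choose (i + 1) with hb
  have P : d.choose (i + 1) = a + b := by
    have : d = (d - 1) + 1 := by omega
    rw [this, Nat.choose_succ_succ']
  have F1 : (d - (i + 1)) * a = (i + 1) * b := by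
    have := Nat.choose_succ_right_eq (d - 1) i
    have h2 : d - 1 - i = d - (i + 1) := by omega
    rw [h2] at this; rw [mul_comm _ a, ← this]; ring
  have F2 : (d - 1) * (d - 2).choose (i + 1) = (d - 1 - (i + 1)) * b := by
    have h1 := Nat.add_one_mul_choose_eq (d - 2) (i + 1)
    have h2 : d - 2 + 1 = d - 1 := by omega
    rw [h2] at h1
    have h3 := Nat.choose_succ_right_eq (d - 1) (i + 1)
    rw [h1, h3, hb]
    ring
  rw [P, F2]
  by_cases hcase : i + 1 ≤ d - 1
  · have step : d * (a + b) = (i + 1) * a + (d - (i + 1)) * a + d * b := by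
      have hc : i + 1 + (d - (i + 1)) = d := by omega
      calc d * (a + b) = ((i + 1) + (d - (i + 1))) * a + d * b := by rw [hc]; ring
        _ = (i + 1) * a + (d - (i + 1)) * a + d * b := by ring
    rw [step, F1]
    have hc2 : (i + 1) + d = (2 * (i + 1) + 1) + (d - 1 - (i + 1)) := by omega
    calc (i + 1) * a + (i + 1) * b + d * b
        = (i + 1) * a + ((i + 1) + d) * b := by ring
      _ = (i + 1) * a + ((2 * (i + 1) + 1) + (d - 1 - (i + 1))) * b := by rw [hc2]
      _ = (i + 1) * a + (2 * (i + 1) + 1) * b + (d - 1 - (i + 1)) * b := by ring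
  · have hi : i + 1 = d := by omega
    have hb0 : b = 0 := by rw [hb]; exact Nat.choose_eq_zero_of_lt (by omega)
    rw [hb0, hi]
    simp

lemma main_basis (d m : ℕ) (hd : 2 ≤ d) :
    d * ∑ j ∈ range (d + 1), 2 ^ j * (d.choose j * m.choose j)
      = (2 * m + 1) * ∑ j ∈ range (d + 1), 2 ^ j * ((d - 1).choose j * m.choose j)
        + (d - 1) * ∑ j ∈ range (d + 1), 2 ^ j * ((d - 2).choose j * m.choose j) := by
  have L : d * ∑ j ∈ range (d + 1), 2 ^ j * (d.choose j * m.choose j)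
      = (∑ j ∈ range (d + 1), 2 ^ j * (j * (d - 1).choose (j - 1)) * m.choose j)
        + (∑ j ∈ range (d + 1), 2 ^ j * ((2 * j + 1) * (d - 1).choose j) * m.choose j)
        + (∑ j ∈ range (d + 1), 2 ^ j * ((d - 1) * (d - 2).choose j) * m.choose j) := by
    rw [Finset.mul_sum, ← Finset.sum_add_distrib, ← Finset.sum_add_distrib]
    refine Finset.sum_congr rfl fun j hj => ?_
    have hj' : j ≤ d := Nat.lt_succ_iff.mp (mem_range.mp hj)
    have := key2 d j hd hj'
    calc d * (2 ^ j * (d.choose j * m.choose j))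
        = 2 ^ j * (d * d.choose j) * m.choose j := by ring
      _ = 2 ^ j * (j * (d - 1).choose (j - 1) + (2 * j + 1) * (d - 1).choose j
            + (d - 1) * (d - 2).choose j) * m.choose j := by rw [this]
      _ = _ := by ring
  have R1 : (2 * m + 1) * ∑ j ∈ range (d + 1), 2 ^ j * ((d - 1).choose j * m.choose j)
      = (∑ j ∈ range (d + 1), 2 ^ j * (d - 1).choose j * (2 * ((j + 1) * m.choose (j + 1))))
        + (∑ j ∈ range (d + 1), 2 ^ j * ((2 * j + 1) * (d - 1).choose j) * m.choose j) := by
    rw [Finset.mul_sum, ← Finset.sum_add_distrib]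
    refine Finset.sum_congr rfl fun j _ => ?_
    calc (2 * m + 1) * (2 ^ j * ((d - 1).choose j * m.choose j))
        = 2 ^ j * (d - 1).choose j * ((2 * m + 1) * m.choose j) := by ring
      _ = 2 ^ j * (d - 1).choose j
            * (2 * ((j + 1) * m.choose (j + 1)) + (2 * j + 1) * m.choose j) := by
          rw [key1]
      _ = _ := by ring
  have R3 : (d - 1) * ∑ j ∈ range (d + 1), 2 ^ j * ((d - 2).choose j * m.choose j)
      = ∑ j ∈ range (d + 1), 2 ^ j * ((d - 1) * (d - 2).choose j) * m.choose j := by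
    rw [Finset.mul_sum]
    exact Finset.sum_congr rfl fun j _ => by ring
  have shift : (∑ j ∈ range (d + 1), 2 ^ j * (j * (d - 1).choose (j - 1)) * m.choose j)
      = ∑ j ∈ range (d + 1), 2 ^ j * (d - 1).choose j * (2 * ((j + 1) * m.choose (j + 1))) := by
    rw [Finset.sum_range_succ' (fun j => 2 ^ j * (j * (d - 1).choose (j - 1)) * m.choose j) d]
    rw [Finset.sum_range_succ]
    have h1 : 2 ^ d * (d - 1).choose d * (2 * ((d + 1) * m.choose (d + 1))) = 0 := by
      rw [Nat.choose_eq_zero_of_lt (by omega)]; ring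
    rw [h1]
    simp only [Nat.zero_eq, Nat.choose_zero_right, mul_zero, zero_mul, add_zero, pow_zero]
    refine Finset.sum_congr rfl fun i _ => ?_
    simp only [Nat.add_sub_cancel]
    rw [pow_succ]
    ring
  rw [L, R1, R3, shift]

theorem cross_polytope_recurrence (d m : ℕ) (hd : 2 ≤ d) :
    d * (∑ k ∈ Finset.range (d + 1), d.choose k * (m + d - k).choose d)
      = (2 * m + 1) * (∑ k ∈ Finset.range d, (d - 1).choose k * (m + (d - 1) - k).choose (d - 1))
        + (d - 1) * (∑ k ∈ Finset.range (d - 1), (d - 2).choose k * (m + (d - 2) - k).choose (d - 2)) := by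
  have h1 : d - 1 + 1 = d := by omega
  have h2 : d - 2 + 1 = d - 1 := by omega
  have pad : ∀ e, e ≤ d → ∑ j ∈ range (e + 1), 2 ^ j * (e.choose j * m.choose j)
      = ∑ j ∈ range (d + 1), 2 ^ j * (e.choose j * m.choose j) := by
    intro e he
    apply Finset.sum_subset
    · intro x hx; simp at hx ⊢; omega
    · intro x hx hnx; simp at hx hnx
      rw [Nat.choose_eq_zero_of_lt (by omega)]; ring
  have e2 : ∑ k ∈ Finset.range d, (d - 1).choose k * (m + (d - 1) - k).choose (d - 1)
      = ∑ j ∈ range (d + 1), 2 ^ j * ((d - 1).choose j * m.choose j) := by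
    have hb := basisform (d - 1) m
    rw [h1] at hb
    have hp := pad (d - 1) (by omega)
    rw [h1] at hp
    rw [hb, hp]
  have e3 : ∑ k ∈ Finset.range (d - 1), (d - 2).choose k * (m + (d - 2) - k).choose (d - 2)
      = ∑ j ∈ range (d + 1), 2 ^ j * ((d - 2).choose j * m.choose j) := by
    have hb := basisform (d - 2) m
    rw [h2] at hb
    have hp := pad (d - 2) (by omega)
    rw [h2] at hp
    rw [hb, hp]
  rw [basisform d m, e2, e3]
  exact main_basis d m hd
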